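/- Let n ≥ 1, let Ω ⊆ ℂⁿ be a bounded nonempty open set, and let φ : ℂⁿ → ℂⁿ be Borel measurable with φ(Ω) ⊆ Ω. Assume the closure of φ(Ω) is a compact subset of Ω. Then there exists C > 0 such that for every f in the Bergman class A²(Ω), ∫_Ω |f(φ(z))|² dV(z) ≤ C ∫_Ω |f|² dV. -/

import Mathlib

open MeasureTheory ENNReal

/-- Lebesgue measure on `ℂⁿ` (the product of the Lebesgue measures on the factors). -/
noncomputable instance EuclideanSpace.measureSpaceComplex {n : ℕ} :
    MeasureSpace (EuclideanSpace ℂ (Fin n)) :=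
  { volume := (volume : Measure (Fin n → ℂ)).map (WithLp.toLp 2) }

instance {n : ℕ} : BorelSpace (EuclideanSpace ℂ (Fin n)) :=
  inferInstanceAs (BorelSpace (PiLp 2 (fun _ : Fin n => ℂ)))

/-- `f` belongs to the Bergman class `A²(Ω)`: holomorphic on `Ω` and square-integrable on `Ω`. -/
def BergmanA2 {n : ℕ} (Ω : Set (EuclideanSpace ℂ (Fin n)))
    (f : EuclideanSpace ℂ (Fin n) → ℂ) : Prop :=
  (∀ z ∈ Ω, DifferentiableAt ℂ f z) ∧
    (∫⁻ z in Ω, (‖f z‖₊ : ℝ≥0∞) ^ 2) < ⊤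

section Aux

open Metric Real intervalIntegral

-- Step 1: circle sub-mean value for the square
lemma circle_submean (g : ℂ → ℂ) (c : ℂ) (ρ : ℝ) (hρ : 0 < ρ)
    (hg : ∀ z ∈ closedBall c ρ, DifferentiableAt ℂ g z) :
    2 * π * ‖g c‖ ^ 2 ≤ ∫ θ in (0:ℝ)..(2 * π), ‖g (circleMap c ρ θ)‖ ^ 2 := by
  have hd : DifferentiableOn ℂ (fun z => g z * g z) (closedBall c ρ) :=
    fun z hz => ((hg z hz).mul (hg z hz)).differentiableWithinAt
  have hC := hd.circleIntegral_sub_inv_smul (w := c) (mem_ball_self hρ)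
  have h1 : ‖(2 * ↑π * Complex.I : ℂ) • (g c * g c)‖ = 2 * π * ‖g c‖ ^ 2 := by
    simp [norm_smul, map_mul,
      abs_of_pos Real.pi_pos, sq]
  rw [← hC] at h1
  rw [← h1]
  have h2 : ∀ θ : ℝ, ‖deriv (circleMap c ρ) θ • ((circleMap c ρ θ - c)⁻¹ •
      (g (circleMap c ρ θ) * g (circleMap c ρ θ)))‖ = ‖g (circleMap c ρ θ)‖ ^ 2 := by
    intro θ
    have hne : circleMap 0 ρ θ ≠ 0 := circleMap_ne_center hρ.ne'
    rw [deriv_circleMap, circleMap_sub_center]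
    simp [norm_smul, map_mul, norm_circleMap_zero, abs_of_pos hρ, sq,
      map_inv₀]
    rw [← mul_assoc, mul_inv_cancel₀ hρ.ne', one_mul]
  calc ‖∮ z in C(c, ρ), (z - c)⁻¹ • (g z * g z)‖
      ≤ ∫ θ in (0:ℝ)..(2*π), ‖deriv (circleMap c ρ) θ • ((circleMap c ρ θ - c)⁻¹ •
          (g (circleMap c ρ θ) * g (circleMap c ρ θ)))‖ := by
        exact intervalIntegral.norm_integral_le_integral_norm (by positivity)
    _ = ∫ θ in (0:ℝ)..(2*π), ‖g (circleMap c ρ θ)‖ ^ 2 := by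
        exact intervalIntegral.integral_congr fun θ _ => h2 θ

lemma circle_submean' (g : ℂ → ℂ) (c : ℂ) (ρ : ℝ) (hρ : 0 < ρ)
    (hg : ∀ z ∈ closedBall c ρ, DifferentiableAt ℂ g z) :
    ENNReal.ofReal (2 * π * ‖g c‖ ^ 2) ≤
      ∫⁻ θ in Set.Ioo (-π) π, ENNReal.ofReal (‖g (circleMap c ρ θ)‖ ^ 2) := by
  have hcont : Continuous fun θ : ℝ => ‖g (circleMap c ρ θ)‖ ^ 2 := by
    apply Continuous.pow
    apply Continuous.norm
    refine continuous_iff_continuousAt.2 fun θ => ?_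
    exact ((hg _ (circleMap_mem_closedBall c hρ.le θ)).continuousAt).comp
      (continuous_circleMap c ρ).continuousAt
  have hper : Function.Periodic (fun θ : ℝ => ‖g (circleMap c ρ θ)‖ ^ 2) (2 * π) := by
    intro θ; simp [periodic_circleMap c ρ θ]
  have h1 : (∫ θ in (-π)..π, ‖g (circleMap c ρ θ)‖ ^ 2) =
      ∫ θ in (0:ℝ)..(2*π), ‖g (circleMap c ρ θ)‖ ^ 2 := by
    have h := hper.intervalIntegral_add_eq (-π) 0
    rw [show -π + 2*π = π by ring, zero_add] at h
    exact h
  have h2 := circle_submean g c ρ hρ hg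
  rw [← h1] at h2
  have h3 : (∫ θ in (-π)..π, ‖g (circleMap c ρ θ)‖ ^ 2) =
      ∫ θ in Set.Ioc (-π) π, ‖g (circleMap c ρ θ)‖ ^ 2 :=
    intervalIntegral.integral_of_le (by linarith [Real.pi_pos])
  have h4 : ENNReal.ofReal (∫ θ in Set.Ioc (-π) π, ‖g (circleMap c ρ θ)‖ ^ 2) =
      ∫⁻ θ in Set.Ioc (-π) π, ENNReal.ofReal (‖g (circleMap c ρ θ)‖ ^ 2) := by
    refine ofReal_integral_eq_lintegral_ofReal ?_ ?_
    · exact (hcont.integrableOn_Ioc)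
    · exact Filter.Eventually.of_forall fun θ => by positivity
  calc ENNReal.ofReal (2 * π * ‖g c‖ ^ 2)
      ≤ ENNReal.ofReal (∫ θ in Set.Ioc (-π) π, ‖g (circleMap c ρ θ)‖ ^ 2) := by
        rw [← h3]; exact ENNReal.ofReal_le_ofReal h2
    _ = ∫⁻ θ in Set.Ioc (-π) π, ENNReal.ofReal (‖g (circleMap c ρ θ)‖ ^ 2) := h4
    _ = ∫⁻ θ in Set.Ioo (-π) π, ENNReal.ofReal (‖g (circleMap c ρ θ)‖ ^ 2) :=
        (setLIntegral_congr MeasureTheory.Ioo_ae_eq_Ioc).symm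

lemma nnnorm_sq_eq_ofReal (x : ℂ) : (‖x‖₊ : ℝ≥0∞) ^ 2 = ENNReal.ofReal (‖x‖ ^ 2) := by
  rw [ENNReal.ofReal_pow (norm_nonneg x), ← ofReal_coe_nnreal, coe_nnnorm]

lemma disc_submean (g : ℂ → ℂ) (c : ℂ) (r : ℝ) (hr : 0 < r)
    (hg : ∀ z ∈ closedBall c r, DifferentiableAt ℂ g z) :
    ENNReal.ofReal (π * r ^ 2) * (‖g c‖₊ : ℝ≥0∞) ^ 2 ≤
      ∫⁻ z in ball c r, (‖g z‖₊ : ℝ≥0∞) ^ 2 := by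
  set T : Set (ℝ × ℝ) := Set.Ioo (0:ℝ) r ×ˢ Set.Ioo (-π) π with hT
  have hTmeas : MeasurableSet T := (measurableSet_Ioo).prod (measurableSet_Ioo)
  set Ψ : ℝ × ℝ → ℝ × ℝ := fun p => (c.re, c.im) + polarCoord.symm p with hΨ
  -- the derivative of Ψ
  set B : ℝ × ℝ → ℝ × ℝ →L[ℝ] ℝ × ℝ := fun p =>
    LinearMap.toContinuousLinearMap (Matrix.toLin (Module.Basis.finTwoProd ℝ) (Module.Basis.finTwoProd ℝ)
      !![Real.cos p.2, -p.1 * Real.sin p.2; Real.sin p.2, p.1 * Real.cos p.2]) with hB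
  have hder : ∀ p ∈ T, HasFDerivWithinAt Ψ (B p) T p := fun p _ =>
    ((hasFDerivAt_polarCoord_symm p).const_add _).hasFDerivWithinAt
  have hdet : ∀ p, (B p).det = p.1 := by
    intro p
    conv_rhs => rw [← one_mul p.1, ← Real.cos_sq_add_sin_sq p.2]
    simp only [hB, neg_mul, LinearMap.det_toContinuousLinearMap, LinearMap.det_toLin,
      Matrix.det_fin_two_of, sub_neg_eq_add]
    ring
  have hinj : Set.InjOn Ψ T := by
    have h1 : Set.InjOn (polarCoord.symm) polarCoord.target := by
      have := polarCoord.symm.injOn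
      exact this
    have hsub : T ⊆ polarCoord.target := by
      rintro ⟨ρ, θ⟩ ⟨h1', h2'⟩
      exact ⟨h1'.1, h2'⟩
    exact fun p hp q hq h => h1.mono hsub hp hq (by
      have := h; simpa [hΨ] using this)
  -- the complex equiv
  have hesymm : ∀ p : ℝ × ℝ, Complex.measurableEquivRealProd.symm (Ψ p) = circleMap c p.1 p.2 := by
    rintro ⟨ρ, θ⟩
    simp only [hΨ, Complex.measurableEquivRealProd_symm_apply, polarCoord_symm_apply,
      circleMap, Complex.ext_iff, Complex.exp_mul_I, Prod.fst_add, Prod.snd_add,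
      Complex.add_re, Complex.add_im, Complex.mul_re, Complex.mul_im]
    constructor <;>
      simp [Complex.cos_ofReal_re, Complex.sin_ofReal_im,
        Complex.cos_ofReal_im, Complex.sin_ofReal_re, Complex.ofReal_re, Complex.ofReal_im] <;>
      ring
  have himg : Complex.measurableEquivRealProd.symm '' (Ψ '' T) ⊆ ball c r := by
    rintro z ⟨q, ⟨p, hp, rfl⟩, rfl⟩
    rw [hesymm p]
    have : dist (circleMap c p.1 p.2) c = |p.1| := by
      rw [dist_eq_norm, circleMap_sub_center, norm_circleMap_zero]
    rw [mem_ball, this, abs_of_pos hp.1.1]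
    exact hp.1.2
  -- change of variables
  have hcov := lintegral_image_eq_lintegral_abs_det_fderiv_mul volume hTmeas hder hinj
    (fun q => (‖g (Complex.measurableEquivRealProd.symm q)‖₊ : ℝ≥0∞) ^ 2)
  have mp : MeasurePreserving Complex.measurableEquivRealProd.symm :=
    Complex.volume_preserving_equiv_real_prod.symm _
  -- continuity of the integrand on T
  have hcm : Continuous fun p : ℝ × ℝ => circleMap c p.1 p.2 := by
    unfold circleMap
    fun_prop
  have hmem : ∀ p : ℝ × ℝ, p ∈ T → circleMap c p.1 p.2 ∈ closedBall c r := by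
    intro p hp
    have : dist (circleMap c p.1 p.2) c = |p.1| := by
      rw [dist_eq_norm, circleMap_sub_center, norm_circleMap_zero]
    rw [mem_closedBall, this, abs_of_pos hp.1.1]
    exact hp.1.2.le
  have hcont : ContinuousOn (fun p : ℝ × ℝ => ‖g (circleMap c p.1 p.2)‖ ^ 2) T := by
    intro p hp
    have h1 : ContinuousAt (fun p : ℝ × ℝ => g (circleMap c p.1 p.2)) p :=
      ContinuousAt.comp (hg _ (hmem p hp)).continuousAt hcm.continuousAt
    exact ((h1.norm.pow 2)).continuousWithinAt
  set F : ℝ × ℝ → ℝ≥0∞ :=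
    fun p => ENNReal.ofReal p.1 * ENNReal.ofReal (‖g (circleMap c p.1 p.2)‖ ^ 2) with hF
  have hFae : AEMeasurable F ((volume : Measure (ℝ × ℝ)).restrict T) :=
    (measurable_fst.ennreal_ofReal.aemeasurable).mul ((hcont.aemeasurable hTmeas).ennreal_ofReal)
  -- Tonelli
  have htone : ∫⁻ p in T, F p = ∫⁻ ρ in Set.Ioo (0:ℝ) r, ∫⁻ θ in Set.Ioo (-π) π, F (ρ, θ) := by
    rw [hT] at hFae ⊢
    rw [Measure.volume_eq_prod, ← Measure.prod_restrict] at hFae ⊢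
    exact lintegral_prod F hFae
  set K : ℝ≥0∞ := ENNReal.ofReal (2 * π * ‖g c‖ ^ 2) with hK
  have hIρ : ∫⁻ ρ in Set.Ioo (0:ℝ) r, ENNReal.ofReal ρ = ENNReal.ofReal (r ^ 2 / 2) := by
    have h := ofReal_integral_eq_lintegral_ofReal (μ := volume.restrict (Set.Ioo (0:ℝ) r))
        (f := fun x : ℝ => x)
        (continuous_id'.integrableOn_Icc.mono_set Set.Ioo_subset_Icc_self)
        (ae_restrict_of_forall_mem measurableSet_Ioo fun x hx => hx.1.le)
    rw [← h]
    congr 1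
    rw [← MeasureTheory.integral_Ioc_eq_integral_Ioo, ← intervalIntegral.integral_of_le hr.le,
      integral_id]
    ring
  calc ENNReal.ofReal (π * r ^ 2) * (‖g c‖₊ : ℝ≥0∞) ^ 2
      = K * ENNReal.ofReal (r ^ 2 / 2) := by
        rw [nnnorm_sq_eq_ofReal, hK, ← ENNReal.ofReal_mul (by positivity),
          ← ENNReal.ofReal_mul (by positivity)]
        congr 1
        ring
    _ = K * ∫⁻ ρ in Set.Ioo (0:ℝ) r, ENNReal.ofReal ρ := by rw [hIρ]
    _ = ∫⁻ ρ in Set.Ioo (0:ℝ) r, K * ENNReal.ofReal ρ :=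
        (lintegral_const_mul' _ _ ofReal_ne_top).symm
    _ ≤ ∫⁻ ρ in Set.Ioo (0:ℝ) r, ∫⁻ θ in Set.Ioo (-π) π, F (ρ, θ) := by
        refine setLIntegral_mono' measurableSet_Ioo fun ρ hρ => ?_
        have hsub : closedBall c ρ ⊆ closedBall c r := closedBall_subset_closedBall hρ.2.le
        have h1 := circle_submean' g c ρ hρ.1 fun z hz => hg z (hsub hz)
        calc K * ENNReal.ofReal ρ = ENNReal.ofReal ρ * K := mul_comm _ _
          _ ≤ ENNReal.ofReal ρ *
              ∫⁻ θ in Set.Ioo (-π) π, ENNReal.ofReal (‖g (circleMap c ρ θ)‖ ^ 2) :=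
            mul_le_mul_right h1 _
          _ = ∫⁻ θ in Set.Ioo (-π) π, F (ρ, θ) :=
            (lintegral_const_mul' _ _ ofReal_ne_top).symm
    _ = ∫⁻ p in T, F p := htone.symm
    _ = ∫⁻ p in T, ENNReal.ofReal |(B p).det| *
          (‖g (Complex.measurableEquivRealProd.symm (Ψ p))‖₊ : ℝ≥0∞) ^ 2 := by
        refine setLIntegral_congr_fun hTmeas (fun p hp => ?_)
        rw [hF, hdet, hesymm, abs_of_pos hp.1.1, nnnorm_sq_eq_ofReal]
    _ = ∫⁻ q in Ψ '' T, (‖g (Complex.measurableEquivRealProd.symm q)‖₊ : ℝ≥0∞) ^ 2 := hcov.symm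
    _ = ∫⁻ z in Complex.measurableEquivRealProd.symm '' (Ψ '' T), (‖g z‖₊ : ℝ≥0∞) ^ 2 :=
        mp.setLIntegral_comp_emb Complex.measurableEquivRealProd.symm.measurableEmbedding
          (fun z => (‖g z‖₊ : ℝ≥0∞) ^ 2) (Ψ '' T)
    _ ≤ ∫⁻ z in ball c r, (‖g z‖₊ : ℝ≥0∞) ^ 2 := lintegral_mono_set himg

-- the continuous linear map `w ↦ Fin.cons 0 w`
noncomputable def consCLM (n : ℕ) : (Fin n → ℂ) →L[ℂ] (Fin (n+1) → ℂ) :=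
  ContinuousLinearMap.pi (fun i => Fin.cases 0 (fun j => ContinuousLinearMap.proj j) i)

noncomputable def headCLM (n : ℕ) : ℂ →L[ℂ] (Fin (n+1) → ℂ) :=
  ContinuousLinearMap.pi (fun i => Fin.cases (ContinuousLinearMap.id ℂ ℂ) (fun _ => 0) i)

lemma cons_eq_add_consCLM (n : ℕ) (x : ℂ) (w : Fin n → ℂ) :
    Fin.cons x w = Fin.cons x (0 : Fin n → ℂ) + consCLM n w := by
  funext i
  refine Fin.cases ?_ (fun j => ?_) i <;>
    simp [consCLM, ContinuousLinearMap.pi_apply]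

lemma cons_eq_add_headCLM (n : ℕ) (x : ℂ) (w : Fin n → ℂ) :
    Fin.cons x w = Fin.cons 0 w + headCLM n x := by
  funext i
  refine Fin.cases ?_ (fun j => ?_) i <;>
    simp [headCLM, ContinuousLinearMap.pi_apply]

lemma diff_cons_right (n : ℕ) (f : (Fin (n+1) → ℂ) → ℂ) (x : ℂ) (w : Fin n → ℂ)
    (hf : DifferentiableAt ℂ f (Fin.cons x w)) :
    DifferentiableAt ℂ (fun w' => f (Fin.cons x w')) w := by
  have hmap : DifferentiableAt ℂ (fun w' : Fin n → ℂ => Fin.cons x w' : (Fin n → ℂ) → Fin (n+1) → ℂ) w := by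
    have : (fun w' : Fin n → ℂ => (Fin.cons x w' : Fin (n+1) → ℂ)) =
        fun w' => Fin.cons x (0 : Fin n → ℂ) + consCLM n w' := by
      funext w'; exact cons_eq_add_consCLM n x w'
    rw [this]
    exact (differentiableAt_const _).add ((consCLM n).differentiable.differentiableAt)
  exact DifferentiableAt.comp w hf hmap

lemma diff_cons_left (n : ℕ) (f : (Fin (n+1) → ℂ) → ℂ) (x : ℂ) (w : Fin n → ℂ)
    (hf : DifferentiableAt ℂ f (Fin.cons x w)) :
    DifferentiableAt ℂ (fun x' => f (Fin.cons x' w)) x := by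
  have hmap : DifferentiableAt ℂ (fun x' : ℂ => (Fin.cons x' w : Fin (n+1) → ℂ)) x := by
    have : (fun x' : ℂ => (Fin.cons x' w : Fin (n+1) → ℂ)) =
        fun x' => Fin.cons 0 w + headCLM n x' := by
      funext x'; exact cons_eq_add_headCLM n x' w
    rw [this]
    exact (differentiableAt_const _).add ((headCLM n).differentiable.differentiableAt)
  exact DifferentiableAt.comp x hf hmap

lemma polydisc_submean : ∀ (n : ℕ) (r : ℝ), 0 < r → ∀ (f : (Fin n → ℂ) → ℂ) (c : Fin n → ℂ),
    (∀ z : Fin n → ℂ, (∀ i, z i ∈ closedBall (c i) r) → DifferentiableAt ℂ f z) →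
    ENNReal.ofReal (π * r ^ 2) ^ n * (‖f c‖₊ : ℝ≥0∞) ^ 2 ≤
      ∫⁻ z in {z : Fin n → ℂ | ∀ i, z i ∈ ball (c i) r}, (‖f z‖₊ : ℝ≥0∞) ^ 2 := by
  intro n
  induction n with
  | zero =>
    intro r hr f c _
    have hset : {z : Fin 0 → ℂ | ∀ i, z i ∈ ball (c i) r} = Set.univ := by
      ext z; simp [Fin.elim0]
    rw [hset, Measure.restrict_univ]
    have hconst : ∀ z : Fin 0 → ℂ, (‖f z‖₊ : ℝ≥0∞) ^ 2 = (‖f c‖₊ : ℝ≥0∞) ^ 2 := by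
      intro z; rw [Subsingleton.elim z c]
    rw [lintegral_congr hconst, lintegral_const]
    have : (volume : Measure (Fin 0 → ℂ)) Set.univ = 1 := by
      rw [volume_pi, Measure.pi_univ]
      simp
    rw [this, pow_zero, one_mul, mul_one]
  | succ n IH =>
    intro r hr f c hf
    set e := MeasurableEquiv.piFinSuccAbove (fun _ : Fin (n+1) => ℂ) 0 with he
    have mp : MeasurePreserving e.symm :=
      (volume_preserving_piFinSuccAbove (fun _ : Fin (n+1) => ℂ) 0).symm _
    have hesymm : ∀ (x : ℂ) (w : Fin n → ℂ), e.symm (x, w) = Fin.cons x w := by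
      intro x w
      show (Fin.insertNthEquiv (fun _ : Fin (n+1) => ℂ) 0) (x, w) = Fin.cons x w
      simp [Fin.insertNthEquiv, Fin.insertNth_zero']
    set A : Set ℂ := ball (c 0) r with hA
    set P' : Set (Fin n → ℂ) := {w | ∀ j, w j ∈ ball (c j.succ) r} with hP'
    have hP'meas : MeasurableSet P' := by
      have : P' = Set.pi Set.univ (fun j => ball (c j.succ) r) := by
        ext w; simp [hP', Set.mem_univ_pi]
      rw [this]
      exact MeasurableSet.univ_pi fun j => measurableSet_ball
    have himg : e.symm '' (A ×ˢ P') ⊆ {z : Fin (n+1) → ℂ | ∀ i, z i ∈ ball (c i) r} := by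
      rintro z ⟨⟨x, w⟩, ⟨hx, hw⟩, rfl⟩
      rw [hesymm]
      intro i
      refine Fin.cases ?_ (fun j => ?_) i
      · simpa [hA] using hx
      · simpa using hw j
    -- continuity of the integrand on A ×ˢ P'
    have hconsC : Continuous fun p : ℂ × (Fin n → ℂ) => (Fin.cons p.1 p.2 : Fin (n+1) → ℂ) := by
      apply continuous_pi
      intro i
      refine Fin.cases ?_ (fun j => ?_) i
      · simpa using continuous_fst
      · simp only [Fin.cons_succ]
        exact (continuous_apply j).comp continuous_snd
    have hcont : ContinuousOn
        (fun p : ℂ × (Fin n → ℂ) => (‖f (e.symm p)‖₊ : ℝ≥0∞) ^ 2) (A ×ˢ P') := by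
      intro p hp
      have hmem : ∀ i, (Fin.cons p.1 p.2 : Fin (n+1) → ℂ) i ∈ closedBall (c i) r := by
        intro i
        refine Fin.cases ?_ (fun j => ?_) i
        · simpa using ball_subset_closedBall hp.1
        · simpa using ball_subset_closedBall (hp.2 j)
      have h1 : ContinuousAt (fun p : ℂ × (Fin n → ℂ) => f (Fin.cons p.1 p.2)) p :=
        ContinuousAt.comp (by rw [← Prod.mk.eta (p := p)] at hmem ⊢; exact (hf _ hmem).continuousAt)
          hconsC.continuousAt
      have h2 : ContinuousAt (fun p : ℂ × (Fin n → ℂ) => (‖f (Fin.cons p.1 p.2)‖₊ : ℝ≥0∞) ^ 2) p := by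
        refine (ENNReal.continuous_pow 2).continuousAt.comp ?_
        exact (ENNReal.continuous_coe.continuousAt).comp h1.nnnorm
      refine ContinuousWithinAt.congr h2.continuousWithinAt ?_ ?_
      · intro q hq; rw [hesymm q.1 q.2]
      · rw [hesymm p.1 p.2]
    have hAE : AEMeasurable (fun p : ℂ × (Fin n → ℂ) => (‖f (e.symm p)‖₊ : ℝ≥0∞) ^ 2)
        (((volume : Measure ℂ).restrict A).prod ((volume : Measure (Fin n → ℂ)).restrict P')) := by
      rw [Measure.prod_restrict]
      exact hcont.aemeasurable (measurableSet_ball.prod hP'meas)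
    have htone : ∫⁻ p in A ×ˢ P', (‖f (e.symm p)‖₊ : ℝ≥0∞) ^ 2
        = ∫⁻ x in A, ∫⁻ w in P', (‖f (e.symm (x, w))‖₊ : ℝ≥0∞) ^ 2 := by
      rw [Measure.volume_eq_prod, ← Measure.prod_restrict]
      exact lintegral_prod _ hAE
    -- outer 1-variable function
    set g1 : ℂ → ℂ := fun x => f (Fin.cons x (Fin.tail c)) with hg1
    have hg1d : ∀ x ∈ closedBall (c 0) r, DifferentiableAt ℂ g1 x := by
      intro x hx
      refine diff_cons_left n f x (Fin.tail c) (hf _ ?_)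
      intro i
      refine Fin.cases ?_ (fun j => ?_) i
      · simpa using hx
      · simp only [Fin.cons_succ, Fin.tail]
        exact mem_closedBall_self hr.le
    have houter : ∀ x ∈ A, ENNReal.ofReal (π * r ^ 2) ^ n * (‖g1 x‖₊ : ℝ≥0∞) ^ 2 ≤
        ∫⁻ w in P', (‖f (e.symm (x, w))‖₊ : ℝ≥0∞) ^ 2 := by
      intro x hx
      have hIH := IH r hr (fun w => f (Fin.cons x w)) (Fin.tail c) ?_
      · refine hIH.trans (le_of_eq ?_)
        refine setLIntegral_congr_fun hP'meas (fun w _ => ?_)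
        rw [hesymm]
      · intro w hw
        refine diff_cons_right n f x w (hf _ ?_)
        intro i
        refine Fin.cases ?_ (fun j => ?_) i
        · simpa using ball_subset_closedBall hx
        · simpa [Fin.tail] using hw j
    have hg1c : g1 (c 0) = f c := by
      show f (Fin.cons (c 0) (Fin.tail c)) = f c
      rw [Fin.cons_self_tail]
    calc ENNReal.ofReal (π * r ^ 2) ^ (n + 1) * (‖f c‖₊ : ℝ≥0∞) ^ 2
        = ENNReal.ofReal (π * r ^ 2) ^ n *
            (ENNReal.ofReal (π * r ^ 2) * (‖g1 (c 0)‖₊ : ℝ≥0∞) ^ 2) := by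
          rw [hg1c, pow_succ, mul_assoc]
      _ ≤ ENNReal.ofReal (π * r ^ 2) ^ n * ∫⁻ x in A, (‖g1 x‖₊ : ℝ≥0∞) ^ 2 :=
          mul_le_mul_right (disc_submean g1 (c 0) r hr hg1d) _
      _ = ∫⁻ x in A, ENNReal.ofReal (π * r ^ 2) ^ n * (‖g1 x‖₊ : ℝ≥0∞) ^ 2 :=
          (lintegral_const_mul' _ _ (pow_ne_top ofReal_ne_top)).symm
      _ ≤ ∫⁻ x in A, ∫⁻ w in P', (‖f (e.symm (x, w))‖₊ : ℝ≥0∞) ^ 2 :=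
          setLIntegral_mono' measurableSet_ball houter
      _ = ∫⁻ p in A ×ˢ P', (‖f (e.symm p)‖₊ : ℝ≥0∞) ^ 2 := htone.symm
      _ = ∫⁻ z in e.symm '' (A ×ˢ P'), (‖f z‖₊ : ℝ≥0∞) ^ 2 :=
          mp.setLIntegral_comp_emb e.symm.measurableEmbedding
            (fun z => (‖f z‖₊ : ℝ≥0∞) ^ 2) (A ×ˢ P')
      _ ≤ ∫⁻ z in {z : Fin (n+1) → ℂ | ∀ i, z i ∈ ball (c i) r}, (‖f z‖₊ : ℝ≥0∞) ^ 2 :=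
          lintegral_mono_set himg

end Aux

open Metric Real in
/-- Lemma 1: if `φ(Ω)` is compactly contained in `Ω`, then the composition operator
`D_φ` is bounded on `A²(Ω)`. -/
theorem projected_composition_stmt1
    (n : ℕ) (hn : 1 ≤ n)
    (Ω : Set (EuclideanSpace ℂ (Fin n)))
    (hΩo : IsOpen Ω) (hΩne : Ω.Nonempty) (hΩb : Bornology.IsBounded Ω)
    (φ : EuclideanSpace ℂ (Fin n) → EuclideanSpace ℂ (Fin n))
    (hφm : Measurable φ) (hφ : Set.MapsTo φ Ω Ω)
    (hcpt : IsCompact (closure (φ '' Ω))) (hsub : closure (φ '' Ω) ⊆ Ω) :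
    ∃ C : ℝ, 0 < C ∧ ∀ f : EuclideanSpace ℂ (Fin n) → ℂ, BergmanA2 Ω f →
      (∫⁻ z in Ω, (‖f (φ z)‖₊ : ℝ≥0∞) ^ 2) ≤
        ENNReal.ofReal C * ∫⁻ z in Ω, (‖f z‖₊ : ℝ≥0∞) ^ 2 := by
  -- Ω has finite volume
  have hvolΩ : (volume : Measure (EuclideanSpace ℂ (Fin n))) Ω < ⊤ := by
    obtain ⟨R, hR⟩ := hΩb.subset_closedBall 0
    have hsub' : ∀ z ∈ Ω, ∀ i, z i ∈ closedBall (0:ℂ) R := by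
      intro z hz i
      have h2 : dist (z i) ((0 : EuclideanSpace ℂ (Fin n)) i) ^ 2 ≤
          ∑ j, dist (z j) ((0 : EuclideanSpace ℂ (Fin n)) j) ^ 2 :=
        Finset.single_le_sum (f := fun j => dist (z j) ((0 : EuclideanSpace ℂ (Fin n)) j) ^ 2)
          (fun j _ => sq_nonneg _) (Finset.mem_univ i)
      have h1 : dist (z i) 0 ≤ dist z 0 := by
        rw [EuclideanSpace.dist_eq]
        have h3 := Real.sqrt_le_sqrt h2
        rwa [Real.sqrt_sq dist_nonneg] at h3
      exact mem_closedBall.2 (h1.trans (mem_closedBall.1 (hR hz)))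
    calc volume Ω
        = (volume : Measure (Fin n → ℂ)) (WithLp.toLp 2 ⁻¹' Ω) :=
          Measure.map_apply (MeasurableEquiv.toLp 2 (Fin n → ℂ)).measurable hΩo.measurableSet
      _ ≤ (volume : Measure (Fin n → ℂ)) (Set.pi Set.univ fun _ => closedBall (0:ℂ) R) :=
          measure_mono (fun z hz i _ => hsub' _ hz i)
      _ < ⊤ := by
          rw [volume_pi_pi]
          exact ENNReal.prod_lt_top fun i _ =>
            measure_closedBall_lt_top (μ := (volume : Measure ℂ)) (x := 0) (r := R)
  -- a uniform polydisc radius around points of the compact set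
  obtain ⟨δ, hδ, hthick⟩ := hcpt.exists_thickening_subset_open hΩo hsub
  set r : ℝ := δ / (2 * n) with hrdef
  have hn' : (1:ℝ) ≤ n := by exact_mod_cast hn
  have hr : 0 < r := by positivity
  -- closed polydiscs around points of K stay in Ω
  have hpoly : ∀ z ∈ closure (φ '' Ω), ∀ w : EuclideanSpace ℂ (Fin n),
      (∀ i, w i ∈ closedBall (z i) r) → w ∈ Ω := by
    intro z hz w hw
    have hdist : dist w z ≤ δ / 2 := by
      rw [EuclideanSpace.dist_eq]
      have h1 : ∑ i, dist (w i) (z i) ^ 2 ≤ (n : ℝ) * r ^ 2 := by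
        calc ∑ i, dist (w i) (z i) ^ 2 ≤ ∑ _i : Fin n, r ^ 2 :=
              Finset.sum_le_sum fun i _ =>
                pow_le_pow_left₀ dist_nonneg (mem_closedBall.1 (hw i)) 2
          _ = (n : ℝ) * r ^ 2 := by simp [Finset.card_univ]
      have h2 : (n : ℝ) * r ^ 2 ≤ (δ / 2) ^ 2 := by
        rw [hrdef]
        rw [div_pow]
        have hn0 : (0:ℝ) < n := by linarith
        rw [mul_pow]
        have : (n:ℝ) * (δ ^ 2 / ((2:ℝ) ^ 2 * (n:ℝ) ^ 2)) = δ ^ 2 / (4 * n) := by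
          field_simp
          ring
        rw [this]
        rw [div_pow]
        have h4 : (4:ℝ) ≤ 4 * n := by linarith
        have : δ ^ 2 / (4 * (n:ℝ)) ≤ δ ^ 2 / 4 := by
          apply div_le_div_of_nonneg_left (sq_nonneg δ) (by norm_num) h4
        calc δ ^ 2 / (4 * (n:ℝ)) ≤ δ ^ 2 / 4 := this
          _ = δ ^ 2 / 2 ^ 2 := by norm_num
      have h3 := Real.sqrt_le_sqrt (h1.trans h2)
      rwa [Real.sqrt_sq (by positivity)] at h3
    apply hthick
    rw [Metric.mem_thickening_iff]
    exact ⟨z, hz, lt_of_le_of_lt hdist (by linarith)⟩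
  -- uniform pointwise bound on K
  set a : ℝ≥0∞ := ENNReal.ofReal (π * r ^ 2) with ha
  have ha0 : a ≠ 0 := by
    rw [ha]
    simp only [ne_eq, ENNReal.ofReal_eq_zero, not_le]
    positivity
  have hane : a ≠ ⊤ := ofReal_ne_top
  have key : ∀ (f : EuclideanSpace ℂ (Fin n) → ℂ), BergmanA2 Ω f →
      ∀ z ∈ closure (φ '' Ω), (‖f z‖₊ : ℝ≥0∞) ^ 2 ≤
        (a ^ n)⁻¹ * ∫⁻ w in Ω, (‖f w‖₊ : ℝ≥0∞) ^ 2 := by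
    intro f hf z hz
    have hdiff : ∀ w : Fin n → ℂ, (∀ i, w i ∈ closedBall (z i) r) →
        DifferentiableAt ℂ (fun w : Fin n → ℂ => f (WithLp.toLp 2 w)) w := by
      intro w hw
      exact (hf.1 _ (hpoly z hz (WithLp.toLp 2 w) hw)).comp w
        ((PiLp.continuousLinearEquiv 2 ℂ (fun _ : Fin n => ℂ)).symm.differentiableAt)
    have hsm := polydisc_submean n r hr (fun w : Fin n → ℂ => f (WithLp.toLp 2 w))
      (WithLp.ofLp z) hdiff
    have hmono : (∫⁻ w in {w : Fin n → ℂ | ∀ i, w i ∈ ball (z i) r},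
          (‖f (WithLp.toLp 2 w)‖₊ : ℝ≥0∞) ^ 2)
        ≤ ∫⁻ w in Ω, (‖f w‖₊ : ℝ≥0∞) ^ 2 := by
      refine (lintegral_mono_set (t := WithLp.toLp 2 ⁻¹' Ω) ?_).trans (le_of_eq ?_)
      · intro w hw
        exact hpoly z hz (WithLp.toLp 2 w) fun i => ball_subset_closedBall (hw i)
      · show _ = ∫⁻ w, _ ∂(((volume : Measure (Fin n → ℂ)).map (WithLp.toLp 2)).restrict Ω)
        rw [Measure.restrict_map (f := WithLp.toLp 2) (MeasurableEquiv.toLp 2 (Fin n → ℂ)).measurable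
          hΩo.measurableSet]
        have hE : MeasurableEmbedding (WithLp.toLp 2 : (Fin n → ℂ) → EuclideanSpace ℂ (Fin n)) :=
          (MeasurableEquiv.toLp 2 (Fin n → ℂ)).measurableEmbedding
        exact (hE.lintegral_map (fun w => (‖f w‖₊ : ℝ≥0∞) ^ 2)).symm
    have h5 : a ^ n * (‖f z‖₊ : ℝ≥0∞) ^ 2 ≤ ∫⁻ w in Ω, (‖f w‖₊ : ℝ≥0∞) ^ 2 :=
      hsm.trans hmono
    calc (‖f z‖₊ : ℝ≥0∞) ^ 2
        = (a ^ n)⁻¹ * (a ^ n * (‖f z‖₊ : ℝ≥0∞) ^ 2) := by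
          rw [← mul_assoc, ENNReal.inv_mul_cancel (pow_ne_zero n ha0)
            (pow_ne_top hane), one_mul]
      _ ≤ (a ^ n)⁻¹ * ∫⁻ w in Ω, (‖f w‖₊ : ℝ≥0∞) ^ 2 := mul_le_mul_right h5 _
  -- assemble the constant
  set Cen : ℝ≥0∞ := volume Ω * (a ^ n)⁻¹ with hCen
  have hCenne : Cen ≠ ⊤ :=
    ENNReal.mul_ne_top hvolΩ.ne (ENNReal.inv_ne_top.2 (pow_ne_zero n ha0))
  refine ⟨Cen.toReal + 1, by positivity, fun f hf => ?_⟩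
  have hCle : Cen ≤ ENNReal.ofReal (Cen.toReal + 1) := by
    conv_lhs => rw [← ENNReal.ofReal_toReal hCenne]
    exact ENNReal.ofReal_le_ofReal (by linarith)
  calc (∫⁻ z in Ω, (‖f (φ z)‖₊ : ℝ≥0∞) ^ 2)
      ≤ ∫⁻ _z in Ω, (a ^ n)⁻¹ * ∫⁻ w in Ω, (‖f w‖₊ : ℝ≥0∞) ^ 2 := by
        refine setLIntegral_mono' hΩo.measurableSet fun z hz => ?_
        exact key f hf (φ z) (subset_closure (Set.mem_image_of_mem φ hz))
    _ = volume Ω * ((a ^ n)⁻¹ * ∫⁻ w in Ω, (‖f w‖₊ : ℝ≥0∞) ^ 2) := by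
        rw [setLIntegral_const, mul_comm]
    _ = Cen * ∫⁻ w in Ω, (‖f w‖₊ : ℝ≥0∞) ^ 2 := by rw [hCen, mul_assoc]
    _ ≤ ENNReal.ofReal (Cen.toReal + 1) * ∫⁻ w in Ω, (‖f w‖₊ : ℝ≥0∞) ^ 2 :=
        mul_le_mul_left hCle _
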